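/- arXiv:1903.07242 — 7 statements merged into one kernel-verified Lean document; each statement's English description precedes it below -/
import Mathlib

section
/- The set GDer(T) of homogeneous generalized k-derivations (over all nonnegative integers k) of a δ-Jordan Lie supertriple system T is closed under the supercommutator [D₁,D₂] = D₁D₂ - (-1)^{|D₁||D₂|}D₂D₁; more precisely, if D₁ is a generalized k-derivation with associated maps D₁', D₁'', D₁''' and D₂ is a generalized l-derivation with associated maps D₂', D₂'', D₂''', then [D₁,D₂] is a generalized (k+l)-derivation with associated maps [D₁',D₂'], [D₁'',D₂''], [D₁''',D₂''']. -/
/-- The sign `(-1)^{ij}` for degrees `i, j ∈ ℤ/2`, valued in the field `k`. -/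
def sgn (k : Type) [Field k] (i j : ZMod 2) : k := (-1 : k) ^ (i.val * j.val)

/-- A `δ`-Jordan Lie supertriple system: a `ℤ/2`-graded vector space `M` over `k`
with a trilinear product satisfying the four graded axioms. -/
structure DJLSTS (k : Type) [Field k] (M : Type) [AddCommGroup M] [Module k M] (δ : k) where
  grade : ZMod 2 → Submodule k M
  direct : DirectSum.IsInternal grade
  br : M →ₗ[k] M →ₗ[k] M →ₗ[k] M
  delta_pm : δ = 1 ∨ δ = -1
  grade_br : ∀ {i j l : ZMod 2} {a b c : M},
      a ∈ grade i → b ∈ grade j → c ∈ grade l → br a b c ∈ grade (i + j + l)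
  skew : ∀ {i j : ZMod 2} {a b : M}, a ∈ grade i → b ∈ grade j → ∀ c : M,
      br b a c = -((δ * sgn k i j) • br a b c)
  cyclic : ∀ {i j l : ZMod 2} {a b c : M},
      a ∈ grade i → b ∈ grade j → c ∈ grade l →
      sgn k i l • br a b c + sgn k j i • br b c a + sgn k l j • br c a b = 0
  fund : ∀ {i j l m : ZMod 2} {a b c d : M},
      a ∈ grade i → b ∈ grade j → c ∈ grade l → d ∈ grade m → ∀ e : M,
      br a b (br c d e) = br (br a b c) d e + sgn k l (i + j) • br c (br a b d) e
        + (δ * sgn k (i + j) (l + m)) • br c d (br a b e)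

/-- A `δ`-Jordan Lie superalgebra. -/
structure DJLSA (k : Type) [Field k] (M : Type) [AddCommGroup M] [Module k M] (δ : k) where
  grade : ZMod 2 → Submodule k M
  direct : DirectSum.IsInternal grade
  br2 : M →ₗ[k] M →ₗ[k] M
  delta_pm : δ = 1 ∨ δ = -1
  grade_br2 : ∀ {i j : ZMod 2} {a b : M},
      a ∈ grade i → b ∈ grade j → br2 a b ∈ grade (i + j)
  skew2 : ∀ {i j : ZMod 2} {a b : M}, a ∈ grade i → b ∈ grade j →
      br2 b a = -((δ * sgn k i j) • br2 a b)
  jacobi : ∀ {i j l : ZMod 2} {a b c : M},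
      a ∈ grade i → b ∈ grade j → c ∈ grade l →
      (δ * sgn k i l) • br2 (br2 a b) c + (δ * sgn k j i) • br2 (br2 b c) a
        + (δ * sgn k l j) • br2 (br2 c a) b = 0

/-- An (ungraded) `δ`-Jordan Lie triple system. -/
structure DJLTS (k : Type) [Field k] (W : Type) [AddCommGroup W] [Module k W] (δ : k) where
  br : W →ₗ[k] W →ₗ[k] W →ₗ[k] W
  delta_pm : δ = 1 ∨ δ = -1
  skew : ∀ a b c : W, br b a c = -(δ • br a b c)
  cyclic : ∀ a b c : W, br a b c + br b c a + br c a b = 0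
  fund : ∀ a b c d e : W,
      br a b (br c d e) = br (br a b c) d e + br c (br a b d) e + δ • br c d (br a b e)

variable {k : Type} [Field k] {M : Type} [AddCommGroup M] [Module k M] {δ : k}
variable {W : Type} [AddCommGroup W] [Module k W]

/-- `D` is homogeneous of degree `s` with respect to the grading of `S`. -/
def IsHomog (S : DJLSTS k M δ) (s : ZMod 2) (D : M →ₗ[k] M) : Prop :=
  ∀ (i : ZMod 2) (a : M), a ∈ S.grade i → D a ∈ S.grade (s + i)

/-- Supercommutator `[D₁,D₂] = D₁D₂ - (-1)^{|D₁||D₂|} D₂D₁` of homogeneous operators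
of degrees `s₁`, `s₂`. -/
def scomm (s₁ s₂ : ZMod 2) (D₁ D₂ : M →ₗ[k] M) : M →ₗ[k] M :=
  D₁ ∘ₗ D₂ - sgn k s₁ s₂ • (D₂ ∘ₗ D₁)

/-- Homogeneous `n`-derivation of degree `s`. -/
def IsDer (S : DJLSTS k M δ) (n : ℕ) (s : ZMod 2) (D : M →ₗ[k] M) : Prop :=
  IsHomog S s D ∧ ∀ {i j : ZMod 2} {a b : M}, a ∈ S.grade i → b ∈ S.grade j → ∀ c : M,
    δ ^ n • S.br (D a) b c + (δ ^ n * sgn k s i) • S.br a (D b) c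
      + (δ ^ n * sgn k s (i + j)) • S.br a b (D c) = D (S.br a b c)

/-- Homogeneous generalized `n`-derivation of degree `s`, with associated maps `D' D'' D'''`. -/
def IsGenDer (S : DJLSTS k M δ) (n : ℕ) (s : ZMod 2) (D D' D'' D''' : M →ₗ[k] M) : Prop :=
  IsHomog S s D ∧ IsHomog S s D' ∧ IsHomog S s D'' ∧ IsHomog S s D''' ∧
  ∀ {i j : ZMod 2} {a b : M}, a ∈ S.grade i → b ∈ S.grade j → ∀ c : M,
    δ ^ n • S.br (D a) b c + (δ ^ n * sgn k s i) • S.br a (D' b) c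
      + (δ ^ n * sgn k s (i + j)) • S.br a b (D'' c) = D''' (S.br a b c)

/-- Membership in the `n`-centroid, for `D` homogeneous of degree `s`. -/
def IsCentroid (S : DJLSTS k M δ) (n : ℕ) (s : ZMod 2) (D : M →ₗ[k] M) : Prop :=
  IsHomog S s D ∧ ∀ {i j : ZMod 2} {a b : M}, a ∈ S.grade i → b ∈ S.grade j → ∀ c : M,
    δ ^ n • S.br (D a) b c = D (S.br a b c) ∧
    (δ ^ n * sgn k s i) • S.br a (D b) c = D (S.br a b c) ∧
    (δ ^ n * sgn k s (i + j)) • S.br a b (D c) = D (S.br a b c)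

/-- Membership in the quasicentroid, for `D` homogeneous of degree `s`. -/
def IsQC (S : DJLSTS k M δ) (s : ZMod 2) (D : M →ₗ[k] M) : Prop :=
  IsHomog S s D ∧ ∀ a b c : M, D (S.br a b c) = S.br (D a) b c

/-- Central derivation. -/
def IsZDer (S : DJLSTS k M δ) (D : M →ₗ[k] M) : Prop :=
  ∀ a b c : M, D (S.br a b c) = 0 ∧ S.br (D a) b c = 0

/-- The operator `D(a,b) = (-1)^{|a||b|}θ(b,a) - δθ(a,b)` attached to a bilinear map `θ`,
where `i, j` are the degrees of `a, b`. -/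
def Dop (δ : k) (θ : M →ₗ[k] M →ₗ[k] W →ₗ[k] W) (i j : ZMod 2) (a b : M) : W →ₗ[k] W :=
  sgn k i j • θ b a - δ • θ a b

/-- A representation of a `δ`-Jordan Lie supertriple system `S` on a
`ℤ/2`-graded vector space `V`. -/
structure DJRep (S : DJLSTS k M δ) (V : Type) [AddCommGroup V] [Module k V] where
  Vgrade : ZMod 2 → Submodule k V
  Vdirect : DirectSum.IsInternal Vgrade
  θ : M →ₗ[k] M →ₗ[k] V →ₗ[k] V
  θ_grade : ∀ {i j n : ZMod 2} {a b : M} {v : V},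
      a ∈ S.grade i → b ∈ S.grade j → v ∈ Vgrade n → θ a b v ∈ Vgrade (i + j + n)
  rep1 : ∀ {i j l m : ZMod 2} {a b c d : M},
      a ∈ S.grade i → b ∈ S.grade j → c ∈ S.grade l → d ∈ S.grade m → ∀ v : V,
      sgn k (i + j) (l + m) • θ c d (θ a b v)
        - (δ * sgn k i j * sgn k m (l + i)) • θ b d (θ a c v)
        - θ a (S.br b c d) v + sgn k i (j + l) • Dop δ θ j l b c (θ a d v) = 0
  rep2 : ∀ {i j l m : ZMod 2} {a b c d : M},
      a ∈ S.grade i → b ∈ S.grade j → c ∈ S.grade l → d ∈ S.grade m → ∀ v : V,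
      (δ * sgn k (i + j) (l + m)) • θ c d (Dop δ θ i j a b v)
        - δ • Dop δ θ i j a b (θ c d v)
        + θ (S.br a b c) d v + (δ * sgn k l (i + j)) • θ c (S.br a b d) v = 0
  rep3 : ∀ {i j l m : ZMod 2} {a b c d : M},
      a ∈ S.grade i → b ∈ S.grade j → c ∈ S.grade l → d ∈ S.grade m → ∀ v : V,
      Dop δ θ (i + j + l) m (S.br a b c) d v
        + sgn k l (i + j) • Dop δ θ l (i + j + m) c (S.br a b d) v
        - δ • Dop δ θ i j a b (Dop δ θ l m c d v)
        + sgn k (i + j) (l + m) • Dop δ θ l m c d (Dop δ θ i j a b v) = 0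

/-- The coboundary `d¹` of a `1`-cochain `f` of degree `s`, as a function of the degrees
`i j l` and the (homogeneous) arguments. -/
def d1 (S : DJLSTS k M δ) (R : DJRep S W) (s : ZMod 2) (f : M →ₗ[k] W) :
    ZMod 2 → ZMod 2 → ZMod 2 → M → M → M → W := fun i j l x₁ x₂ x₃ =>
  sgn k (s + i) (j + l) • R.θ x₂ x₃ (f x₁) - f (S.br x₁ x₂ x₃)
    + (δ * sgn k s (i + j)) • Dop δ R.θ i j x₁ x₂ (f x₃)
    - (δ * sgn k j l * sgn k s (i + l)) • R.θ x₁ x₃ (f x₂)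

/-- The coboundary `d³` of a `3`-cochain `g` of degree `s` (given together with the
degrees of its arguments), as a function of the degrees and the (homogeneous) arguments. -/
def d3 (S : DJLSTS k M δ) (R : DJRep S W) (s : ZMod 2)
    (g : ZMod 2 → ZMod 2 → ZMod 2 → M → M → M → W) :
    ZMod 2 → ZMod 2 → ZMod 2 → ZMod 2 → ZMod 2 → M → M → M → M → M → W :=
  fun i₁ i₂ i₃ i₄ i₅ x₁ x₂ x₃ x₄ x₅ =>
    sgn k (s + i₁ + i₂ + i₃) (i₄ + i₅) • R.θ x₄ x₅ (g i₁ i₂ i₃ x₁ x₂ x₃)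
    - (δ * sgn k (s + i₁ + i₂) (i₃ + i₅) * sgn k i₄ i₅) • R.θ x₃ x₅ (g i₁ i₂ i₄ x₁ x₂ x₄)
    - (δ * sgn k s (i₁ + i₂)) • Dop δ R.θ i₁ i₂ x₁ x₂ (g i₃ i₄ i₅ x₃ x₄ x₅)
    + sgn k (s + i₁ + i₂) (i₃ + i₄) • Dop δ R.θ i₃ i₄ x₃ x₄ (g i₁ i₂ i₅ x₁ x₂ x₅)
    + g (i₁ + i₂ + i₃) i₄ i₅ (S.br x₁ x₂ x₃) x₄ x₅
    - g i₁ i₂ (i₃ + i₄ + i₅) x₁ x₂ (S.br x₃ x₄ x₅)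
    + sgn k i₃ (i₁ + i₂) • g i₃ (i₁ + i₂ + i₄) i₅ x₃ (S.br x₁ x₂ x₄) x₅
    + (δ * sgn k (i₁ + i₂) (i₃ + i₄)) • g i₃ i₄ (i₁ + i₂ + i₅) x₃ x₄ (S.br x₁ x₂ x₅)

/-- An even trilinear map `ψ` is a `3`-cocycle of `S` (with respect to the adjoint
representation): `d³ψ = 0`, written out explicitly. -/
def IsCocycle3 (S : DJLSTS k M δ) (ψ : M →ₗ[k] M →ₗ[k] M →ₗ[k] M) : Prop :=
  ∀ {i₁ i₂ i₃ i₄ : ZMod 2} {x₁ x₂ x₃ x₄ : M},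
    x₁ ∈ S.grade i₁ → x₂ ∈ S.grade i₂ → x₃ ∈ S.grade i₃ → x₄ ∈ S.grade i₄ → ∀ x₅ : M,
    S.br x₁ x₂ (ψ x₃ x₄ x₅) + ψ x₁ x₂ (S.br x₃ x₄ x₅)
      = S.br (ψ x₁ x₂ x₃) x₄ x₅ + ψ (S.br x₁ x₂ x₃) x₄ x₅
        + sgn k i₃ (i₁ + i₂) • (S.br x₃ (ψ x₁ x₂ x₄) x₅ + ψ x₃ (S.br x₁ x₂ x₄) x₅)
        + (δ * sgn k (i₁ + i₂) (i₃ + i₄))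
            • (S.br x₃ x₄ (ψ x₁ x₂ x₅) + ψ x₃ x₄ (S.br x₁ x₂ x₅))

/-- A 1-parameter formal deformation `f_t = ∑ fᵢ tⁱ` of `S`, recorded by its sequence of
coefficients, satisfying equations (4.5)–(4.8). -/
def IsDeformation (S : DJLSTS k M δ) (F : ℕ → (M →ₗ[k] M →ₗ[k] M →ₗ[k] M)) : Prop :=
  F 0 = S.br ∧
  (∀ (p : ℕ) {i j l : ZMod 2} {a b c : M},
      a ∈ S.grade i → b ∈ S.grade j → c ∈ S.grade l → F p a b c ∈ S.grade (i + j + l)) ∧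
  (∀ (p : ℕ) {i j : ZMod 2} {a b : M}, a ∈ S.grade i → b ∈ S.grade j → ∀ c : M,
      F p b a c = -((δ * sgn k i j) • F p a b c)) ∧
  (∀ (p : ℕ) {i j l : ZMod 2} {a b c : M},
      a ∈ S.grade i → b ∈ S.grade j → c ∈ S.grade l →
      sgn k i l • F p a b c + sgn k j i • F p b c a + sgn k l j • F p c a b = 0) ∧
  (∀ (n : ℕ) {i j l m : ZMod 2} {a b c d : M},
      a ∈ S.grade i → b ∈ S.grade j → c ∈ S.grade l → d ∈ S.grade m → ∀ e : M,
      ∑ p ∈ Finset.range (n + 1), F p a b (F (n - p) c d e)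
        = ∑ p ∈ Finset.range (n + 1),
            (F p (F (n - p) a b c) d e
              + sgn k l (i + j) • F p c (F (n - p) a b d) e
              + (δ * sgn k (i + j) (l + m)) • F p c d (F (n - p) a b e)))

/-- Equivalence of two formal deformations via a formal isomorphism
`φ_t = ∑ φᵢ tⁱ` with `φ₀ = id`: `φ_t ∘ f_t = f'_t ∘ (φ_t × φ_t × φ_t)` coefficientwise. -/
def DefEquiv (S : DJLSTS k M δ) (F F' : ℕ → (M →ₗ[k] M →ₗ[k] M →ₗ[k] M))
    (φ : ℕ → (M →ₗ[k] M)) : Prop :=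
  φ 0 = LinearMap.id ∧
  ∀ (n : ℕ) (x₁ x₂ x₃ : M),
    ∑ p ∈ Finset.range (n + 1), φ p (F (n - p) x₁ x₂ x₃)
      = ∑ q ∈ Finset.Nat.antidiagonalTuple 4 n,
          F' (q 0) (φ (q 1) x₁) (φ (q 2) x₂) (φ (q 3) x₃)

/-- Nijenhuis operator on a `δ`-Jordan Lie supertriple system. -/
def IsNijenhuis (S : DJLSTS k M δ) (N : M →ₗ[k] M) : Prop :=
  (∀ x₁ x₂ x₃ : M, S.br (N x₁) (N x₂) (N x₃) = 0) ∧
  (∀ x₁ x₂ x₃ : M,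
    N (N (S.br x₁ x₂ x₃))
      = N (S.br (N x₁) x₂ x₃) + N (S.br x₁ (N x₂) x₃) + N (S.br x₁ x₂ (N x₃))
        - S.br (N x₁) (N x₂) x₃ - S.br x₁ (N x₂) (N x₃) - S.br (N x₁) x₂ (N x₃))

lemma sgn_comm' (i j : ZMod 2) : sgn k i j = sgn k j i := by
  rw [sgn, sgn, Nat.mul_comm]

lemma sgn_add_right' (i j l : ZMod 2) : sgn k i (j + l) = sgn k i j * sgn k i l := by
  fin_cases i <;> fin_cases j <;> fin_cases l <;>
    simp only [sgn, ← pow_add] <;>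
    rw [neg_one_pow_eq_pow_mod_two, neg_one_pow_eq_pow_mod_two (n := _ + _)] <;> rfl

lemma sgn_add_left' (i j l : ZMod 2) : sgn k (i + j) l = sgn k i l * sgn k j l := by
  fin_cases i <;> fin_cases j <;> fin_cases l <;>
    simp only [sgn, ← pow_add] <;>
    rw [neg_one_pow_eq_pow_mod_two, neg_one_pow_eq_pow_mod_two (n := _ + _)] <;> rfl

lemma sgn_pm (i j : ZMod 2) : sgn k i j = 1 ∨ sgn k i j = -1 := by
  fin_cases i <;> fin_cases j <;> simp [sgn, ZMod.val_one, ZMod.val]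

lemma homog_scomm {S : DJLSTS k M δ} {s₁ s₂ : ZMod 2} {D₁ D₂ : M →ₗ[k] M}
    (h₁ : IsHomog S s₁ D₁) (h₂ : IsHomog S s₂ D₂) :
    IsHomog S (s₁ + s₂) (scomm s₁ s₂ D₁ D₂) := by
  intro i a ha
  simp only [scomm, LinearMap.sub_apply, LinearMap.smul_apply, LinearMap.comp_apply]
  refine Submodule.sub_mem _ ?_ (Submodule.smul_mem _ _ ?_)
  · have := h₁ (s₂ + i) _ (h₂ i a ha); rwa [← add_assoc] at this
  · have := h₂ (s₁ + i) _ (h₁ i a ha)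
    rwa [show s₂ + (s₁ + i) = s₁ + s₂ + i by ring] at this

/-- the supercommutator of a generalized `n₁`-derivation and a generalized
`n₂`-derivation is a generalized `(n₁+n₂)`-derivation with the supercommutators of the
associated maps as its associated maps. -/
theorem stmt3 (S : DJLSTS k M δ) {n₁ n₂ : ℕ} {s₁ s₂ : ZMod 2}
    {D₁ D₁' D₁'' D₁''' D₂ D₂' D₂'' D₂''' : M →ₗ[k] M}
    (h₁ : IsGenDer S n₁ s₁ D₁ D₁' D₁'' D₁''')
    (h₂ : IsGenDer S n₂ s₂ D₂ D₂' D₂'' D₂''') :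
    IsGenDer S (n₁ + n₂) (s₁ + s₂) (scomm s₁ s₂ D₁ D₂) (scomm s₁ s₂ D₁' D₂')
      (scomm s₁ s₂ D₁'' D₂'') (scomm s₁ s₂ D₁''' D₂''') := by
  obtain ⟨hH1, hH1', hH1'', hH1''', hE1⟩ := h₁
  obtain ⟨hH2, hH2', hH2'', hH2''', hE2⟩ := h₂
  refine ⟨homog_scomm hH1 hH2, homog_scomm hH1' hH2', homog_scomm hH1'' hH2'',
    homog_scomm hH1''' hH2''', ?_⟩
  intro i j a b ha hb c
  have h1e := hE1 ha hb c
  have h2e := hE2 ha hb c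
  have E1a := hE1 (hH2 i a ha) hb c
  have E1b := hE1 ha (hH2' j b hb) c
  have E1c := hE1 ha hb (D₂'' c)
  have E2a := hE2 (hH1 i a ha) hb c
  have E2b := hE2 ha (hH1' j b hb) c
  have E2c := hE2 ha hb (D₁'' c)
  have eqA := congrArg D₁''' h2e
  have eqB := congrArg D₂''' h1e
  simp only [map_add, map_smul] at eqA eqB
  simp only [scomm, LinearMap.sub_apply, LinearMap.smul_apply, LinearMap.comp_apply,
    map_sub, map_smul]
  simp only [sgn_add_right', sgn_add_left', pow_add,
    show sgn k s₂ s₁ = sgn k s₁ s₂ from sgn_comm' s₂ s₁] at E1a E1b E1c E2a E2b E2c eqA eqB ⊢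
  rcases sgn_pm (k := k) s₁ s₂ with hσ | hσ <;>
    simp only [hσ] at * <;>
    [ (linear_combination (norm := module) eqA + (δ ^ n₂ : k) • E1a
        + (δ ^ n₂ * sgn k s₂ i) • E1b + (δ ^ n₂ * sgn k s₂ i * sgn k s₂ j) • E1c
        - (1 : k) • eqB - (δ ^ n₁ : k) • E2a
        + (- δ ^ n₁ * sgn k s₁ i : k) • E2b
        + (- δ ^ n₁ * sgn k s₁ i * sgn k s₁ j : k) • E2c);
      (linear_combination (norm := module) eqA + (δ ^ n₂ : k) • E1a
        + (δ ^ n₂ * sgn k s₂ i) • E1b + (δ ^ n₂ * sgn k s₂ i * sgn k s₂ j) • E1c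
        + (1 : k) • eqB + (δ ^ n₁ : k) • E2a
        + (δ ^ n₁ * sgn k s₁ i : k) • E2b
        + (δ ^ n₁ * sgn k s₁ i * sgn k s₁ j : k) • E2c)]
end

section
/- The set ZDer(T) of central derivations of a δ-Jordan Lie supertriple system T is an ideal of the derivation algebra Der(T) under the supercommutator: for D₁ ∈ ZDer(T) and D₂ ∈ Der_k(T), the bracket [D₁,D₂] = D₁D₂ - (-1)^{|D₁||D₂|}D₂D₁ lies in ZDer(T). -/
variable {k : Type} [Field k] {M : Type} [AddCommGroup M] [Module k M] {δ : k}
variable {W : Type} [AddCommGroup W] [Module k W]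

lemma decompose2 (S : DJLSTS k M δ) (a : M) :
    ∃ a₀ ∈ S.grade 0, ∃ a₁ ∈ S.grade 1, a = a₀ + a₁ := by
  have htop := S.direct.submodule_iSup_eq_top
  have ha : a ∈ (⨆ i, S.grade i) := htop ▸ Submodule.mem_top
  have hle : (⨆ i, S.grade i) ≤ S.grade 0 ⊔ S.grade 1 := by
    apply iSup_le; intro i
    fin_cases i
    · exact le_sup_left
    · exact le_sup_right
  obtain ⟨x, hx, y, hy, hxy⟩ := Submodule.mem_sup.mp (hle ha)
  exact ⟨x, hx, y, hy, hxy.symm⟩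

/-- `ZDer(T)` is an ideal of `Der(T)`: the supercommutator of a central
derivation with a homogeneous `n`-derivation is a central derivation. -/
theorem stmt4 (S : DJLSTS k M δ) {n : ℕ} {s₁ s₂ : ZMod 2} {D₁ D₂ : M →ₗ[k] M}
    (h₁ : IsZDer S D₁) (h₁h : IsHomog S s₁ D₁) (h₂ : IsDer S n s₂ D₂) :
    IsZDer S (scomm s₁ s₂ D₁ D₂) := by
  have hδ : δ ≠ 0 := by
    rcases S.delta_pm with h | h <;> rw [h] <;> simp
  have hδn : (δ : k) ^ n ≠ 0 := pow_ne_zero _ hδ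
  -- Lemma A : D₁ (D₂ (br a b c)) = 0
  have lemA : ∀ a b c : M, D₁ (D₂ (S.br a b c)) = 0 := by
    intro a b c
    obtain ⟨a₀, ha₀, a₁, ha₁, rfl⟩ := decompose2 S a
    obtain ⟨b₀, hb₀, b₁, hb₁, rfl⟩ := decompose2 S b
    have key : ∀ (i j : ZMod 2) (x y : M), x ∈ S.grade i → y ∈ S.grade j →
        D₁ (D₂ (S.br x y c)) = 0 := by
      intro i j x y hx hy
      rw [← h₂.2 hx hy c]
      simp only [map_add, map_smul, (h₁ (D₂ x) y c).1, (h₁ x (D₂ y) c).1,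
        (h₁ x y (D₂ c)).1, smul_zero, add_zero]
    simp only [map_add, LinearMap.add_apply]
    rw [key 0 0 a₀ b₀ ha₀ hb₀, key 0 1 a₀ b₁ ha₀ hb₁,
        key 1 0 a₁ b₀ ha₁ hb₀, key 1 1 a₁ b₁ ha₁ hb₁]
    simp
  -- Lemma B : br (D₂ (D₁ a)) b c = 0
  have lemB : ∀ a b c : M, S.br (D₂ (D₁ a)) b c = 0 := by
    intro a b c
    obtain ⟨a₀, ha₀, a₁, ha₁, rfl⟩ := decompose2 S a
    obtain ⟨b₀, hb₀, b₁, hb₁, rfl⟩ := decompose2 S b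
    have key : ∀ (i j : ZMod 2) (x y : M), x ∈ S.grade i → y ∈ S.grade j →
        S.br (D₂ (D₁ x)) y c = 0 := by
      intro i j x y hx hy
      have hD₁x : D₁ x ∈ S.grade (s₁ + i) := h₁h i x hx
      have hder := h₂.2 hD₁x hy c
      rw [(h₁ x y c).2, (h₁ x (D₂ y) c).2, (h₁ x y (D₂ c)).2] at hder
      simp only [smul_zero, add_zero, map_zero] at hder
      exact (smul_eq_zero.mp hder).resolve_left hδn
    simp only [map_add, LinearMap.add_apply]
    rw [key 0 0 a₀ b₀ ha₀ hb₀, key 0 1 a₀ b₁ ha₀ hb₁,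
        key 1 0 a₁ b₀ ha₁ hb₀, key 1 1 a₁ b₁ ha₁ hb₁]
    simp
  intro a b c
  constructor
  · simp only [scomm, LinearMap.sub_apply, LinearMap.smul_apply, LinearMap.comp_apply,
      lemA, (h₁ a b c).1, map_zero, smul_zero, sub_zero]
  · simp only [scomm, LinearMap.sub_apply, LinearMap.smul_apply, LinearMap.comp_apply,
      map_sub, map_smul, LinearMap.sub_apply, LinearMap.smul_apply,
      (h₁ (D₂ a) b c).2, lemB, smul_zero, sub_zero]
end

section
/- For a δ-Jordan Lie supertriple system T, the supercommutator of a k-derivation and an element of the l-centroid lies in the (k+l)-centroid: if D₁ ∈ Der_k(T) and D₂ ∈ C_l(T), then [D₁,D₂] = D₁D₂ - (-1)^{|D₁||D₂|}D₂D₁ ∈ C^{k+l}(T). In particular [Der(T), C(T)] ⊆ C(T). -/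
variable {k : Type} [Field k] {M : Type} [AddCommGroup M] [Module k M] {δ : k}
variable {W : Type} [AddCommGroup W] [Module k W]

set_option maxHeartbeats 1600000

/-- `[Der_{n₁}(T), C_{n₂}(T)] ⊆ C^{n₁+n₂}(T)`. -/
theorem stmt5 (S : DJLSTS k M δ) {n₁ n₂ : ℕ} {s₁ s₂ : ZMod 2} {D₁ D₂ : M →ₗ[k] M}
    (h₁ : IsDer S n₁ s₁ D₁) (h₂ : IsCentroid S n₂ s₂ D₂) :
    IsCentroid S (n₁ + n₂) (s₁ + s₂) (scomm s₁ s₂ D₁ D₂) := by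
  obtain ⟨hom1, hd⟩ := h₁
  obtain ⟨hom2, hc⟩ := h₂
  constructor
  · intro i a ha
    simp only [scomm, LinearMap.sub_apply, LinearMap.smul_apply, LinearMap.comp_apply]
    have e : s₂ + (s₁ + i) = s₁ + s₂ + i := by ring
    have e' : s₁ + (s₂ + i) = s₁ + s₂ + i := by ring
    exact Submodule.sub_mem _ (e' ▸ hom1 _ _ (hom2 i a ha))
      (Submodule.smul_mem _ _ (e ▸ hom2 _ _ (hom1 i a ha)))
  · intro i j a b ha hb c
    have hD2a := hom2 i a ha
    have hD2b := hom2 j b hb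
    have hD1a := hom1 i a ha
    have hD1b := hom1 j b hb
    refine ⟨?_, ?_, ?_⟩
    · simp only [scomm, LinearMap.sub_apply, LinearMap.smul_apply, LinearMap.comp_apply]
      rw [← (hc ha hb c).1, map_smul, ← hd hD2a hb c, ← hd ha hb c]
      simp only [map_add, map_smul]
      rw [← (hc hD1a hb c).1, ← (hc ha hD1b c).1, ← (hc ha hb (D₁ c)).1]
      simp only [map_sub, map_smul, LinearMap.sub_apply, LinearMap.smul_apply]
      match_scalars <;>
      · rcases (show ∀ x : ZMod 2, x = 0 ∨ x = 1 by decide) i with rfl | rfl <;> rcases (show ∀ x : ZMod 2, x = 0 ∨ x = 1 by decide) j with rfl | rfl <;> rcases (show ∀ x : ZMod 2, x = 0 ∨ x = 1 by decide) s₁ with rfl | rfl <;> rcases (show ∀ x : ZMod 2, x = 0 ∨ x = 1 by decide) s₂ with rfl | rfl <;>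
          norm_num [sgn, show ZMod.val (2:ZMod 2) = 0 from rfl, show ZMod.val (1:ZMod 2) = 1 from rfl, show ZMod.val (0:ZMod 2) = 0 from rfl, show ZMod.val (3:ZMod 2) = 1 from rfl] <;> ring
    · simp only [scomm, LinearMap.sub_apply, LinearMap.smul_apply, LinearMap.comp_apply]
      rw [← (hc ha hb c).2.1, map_smul, ← hd ha hD2b c, ← hd ha hb c]
      simp only [map_add, map_smul]
      rw [← (hc hD1a hb c).2.1, ← (hc ha hD1b c).2.1, ← (hc ha hb (D₁ c)).2.1]
      simp only [map_sub, map_smul, LinearMap.sub_apply, LinearMap.smul_apply]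
      match_scalars <;>
      · rcases (show ∀ x : ZMod 2, x = 0 ∨ x = 1 by decide) i with rfl | rfl <;> rcases (show ∀ x : ZMod 2, x = 0 ∨ x = 1 by decide) j with rfl | rfl <;> rcases (show ∀ x : ZMod 2, x = 0 ∨ x = 1 by decide) s₁ with rfl | rfl <;> rcases (show ∀ x : ZMod 2, x = 0 ∨ x = 1 by decide) s₂ with rfl | rfl <;>
          norm_num [sgn, show ZMod.val (2:ZMod 2) = 0 from rfl, show ZMod.val (1:ZMod 2) = 1 from rfl, show ZMod.val (0:ZMod 2) = 0 from rfl, show ZMod.val (3:ZMod 2) = 1 from rfl] <;> ring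
    · simp only [scomm, LinearMap.sub_apply, LinearMap.smul_apply, LinearMap.comp_apply]
      rw [← (hc ha hb c).2.2, map_smul, ← hd ha hb (D₂ c), ← hd ha hb c]
      simp only [map_add, map_smul]
      rw [← (hc hD1a hb c).2.2, ← (hc ha hD1b c).2.2, ← (hc ha hb (D₁ c)).2.2]
      simp only [map_sub, map_smul, LinearMap.sub_apply, LinearMap.smul_apply]
      match_scalars <;>
      · rcases (show ∀ x : ZMod 2, x = 0 ∨ x = 1 by decide) i with rfl | rfl <;> rcases (show ∀ x : ZMod 2, x = 0 ∨ x = 1 by decide) j with rfl | rfl <;> rcases (show ∀ x : ZMod 2, x = 0 ∨ x = 1 by decide) s₁ with rfl | rfl <;> rcases (show ∀ x : ZMod 2, x = 0 ∨ x = 1 by decide) s₂ with rfl | rfl <;>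
          norm_num [sgn, show ZMod.val (2:ZMod 2) = 0 from rfl, show ZMod.val (1:ZMod 2) = 1 from rfl, show ZMod.val (0:ZMod 2) = 0 from rfl, show ZMod.val (3:ZMod 2) = 1 from rfl] <;> ring
end

section
/- For a δ-Jordan Lie supertriple system T, the supercommutator of any two elements of the quasicentroid is a quasiderivation: if D₁, D₂ ∈ QC(T), then [[D₁,D₂](a),b,c] + (-1)^{|a|(|D₁|+|D₂|)}[a,[D₁,D₂](b),c] + (-1)^{(|a|+|b|)(|D₁|+|D₂|)}[a,b,[D₁,D₂](c)] = 0 for all a,b,c ∈ T; hence [QC(T), QC(T)] ⊆ QDer(T) (with D' = 0). -/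
variable {k : Type} [Field k] {M : Type} [AddCommGroup M] [Module k M] {δ : k}
variable {W : Type} [AddCommGroup W] [Module k W]

section Stmt6Aux

lemma sgn_sq' (x y : ZMod 2) : sgn k x y * sgn k x y = 1 := by
  fin_cases x <;> fin_cases y <;>
    norm_num [sgn, show ZMod.val (2:ZMod 2) = 0 by decide, ZMod.val_one, ZMod.val_zero, ZMod.val, Fin.val_add]

lemma solve3' {p q r : k} {M : Type} [AddCommGroup M] [Module k M] (hp : p * p = 1) {x y z : M} (h : p • x + q • y + r • z = 0) :
    x = -((p*q) • y + (p*r) • z) := by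
  have h' : p • x = -(q • y + r • z) := by
    rw [add_assoc] at h; exact eq_neg_of_add_eq_zero_left h
  calc x = p • (p • x) := by rw [smul_smul, hp, one_smul]
    _ = p • (-(q • y + r • z)) := by rw [h']
    _ = -((p*q) • y + (p*r) • z) := by rw [smul_neg, smul_add, smul_smul, smul_smul]

lemma qc_slot2 (S : DJLSTS k M δ) {s : ZMod 2} {D : M →ₗ[k] M} (h : IsQC S s D)
    {i j : ZMod 2} {a b : M} (ha : a ∈ S.grade i) (hb : b ∈ S.grade j) (c : M) :
    S.br a (D b) c = sgn k i s • D (S.br a b c) := by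
  have hDb := h.1 j b hb
  calc S.br a (D b) c = -((δ * sgn k (s+j) i) • S.br (D b) a c) := S.skew hDb ha c
    _ = -((δ * sgn k (s+j) i) • D (S.br b a c)) := by rw [← h.2 b a c]
    _ = -((δ * sgn k (s+j) i) • D (-((δ * sgn k i j) • S.br a b c))) := by
        rw [S.skew ha hb c]
    _ = sgn k i s • D (S.br a b c) := by
        rw [map_neg, map_smul]
        match_scalars
        rcases S.delta_pm with hδ | hδ <;> subst hδ <;>
          simp only [sgn, ZMod.val_add] <;> fin_cases i <;> fin_cases j <;> fin_cases s <;>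
          norm_num [sgn, show ZMod.val (2:ZMod 2) = 0 by decide, ZMod.val_one, ZMod.val_zero, ZMod.val, Fin.val_add]

lemma qc_slot3 (S : DJLSTS k M δ) {s : ZMod 2} {D : M →ₗ[k] M} (h : IsQC S s D)
    {i j l : ZMod 2} {a b c : M} (ha : a ∈ S.grade i) (hb : b ∈ S.grade j)
    (hc : c ∈ S.grade l) :
    S.br a b (D c) = sgn k (i+j) s • D (S.br a b c) := by
  have hDc := h.1 l c hc
  have e1 := solve3' (sgn_sq' i (s+l)) (S.cyclic ha hb hDc)
  have e2 : S.br b (D c) a = sgn k j s • D (S.br b c a) := qc_slot2 S h hb hc a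
  have e3 : S.br (D c) a b = D (S.br c a b) := (h.2 c a b).symm
  have e4 : sgn k j i • D (S.br b c a) + sgn k i l • D (S.br a b c)
      + sgn k l j • D (S.br c a b) = 0 := by
    have := congrArg D (S.cyclic ha hb hc)
    simp only [map_add, map_smul, map_zero] at this
    rw [add_comm (sgn k i l • D (S.br a b c))] at this
    exact this
  have e4' := solve3' (sgn_sq' j i) e4
  rw [e2, e3, e4'] at e1
  rw [e1]
  match_scalars <;>
    simp only [sgn, ZMod.val_add] <;> fin_cases i <;> fin_cases j <;> fin_cases l <;> fin_cases s <;>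
    norm_num [sgn, show ZMod.val (2:ZMod 2) = 0 by decide, ZMod.val_one, ZMod.val_zero, ZMod.val, Fin.val_add]

lemma qc_comp (S : DJLSTS k M δ) {s₁ s₂ : ZMod 2} {D₁ D₂ : M →ₗ[k] M}
    (h₁ : IsQC S s₁ D₁) (h₂ : IsQC S s₂ D₂) : IsQC S (s₁ + s₂) (D₁ ∘ₗ D₂) := by
  constructor
  · intro i a ha
    have := h₁.1 (s₂ + i) (D₂ a) (h₂.1 i a ha)
    simpa [add_assoc] using this
  · intro a b c
    simp only [LinearMap.comp_apply, h₂.2, h₁.2]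

lemma qc_key (S : DJLSTS k M δ) {s₁ s₂ : ZMod 2} {D₁ D₂ : M →ₗ[k] M}
    (h₁ : IsQC S s₁ D₁) (h₂ : IsQC S s₂ D₂)
    {i j : ZMod 2} {a b : M} (ha : a ∈ S.grade i) (hb : b ∈ S.grade j) (c : M) :
    D₁ (D₂ (S.br a b c)) = sgn k s₁ s₂ • D₂ (D₁ (S.br a b c)) := by
  have w1 : S.br (D₂ a) (D₁ b) c = sgn k (s₂+i) s₁ • D₁ (D₂ (S.br a b c)) := by
    rw [qc_slot2 S h₁ (h₂.1 i a ha) hb c, ← h₂.2 a b c]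
  have w2 : S.br (D₂ a) (D₁ b) c = sgn k i s₁ • D₂ (D₁ (S.br a b c)) := by
    rw [← h₂.2 a (D₁ b) c, qc_slot2 S h₁ ha hb c, map_smul]
  have w := w1.symm.trans w2
  calc D₁ (D₂ (S.br a b c))
      = sgn k (s₂+i) s₁ • (sgn k (s₂+i) s₁ • D₁ (D₂ (S.br a b c))) := by
        rw [smul_smul, sgn_sq', one_smul]
    _ = sgn k (s₂+i) s₁ • (sgn k i s₁ • D₂ (D₁ (S.br a b c))) := by rw [w]
    _ = sgn k s₁ s₂ • D₂ (D₁ (S.br a b c)) := by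
        rw [smul_smul]
        match_scalars
        simp only [sgn, ZMod.val_add] <;> fin_cases i <;> fin_cases s₁ <;> fin_cases s₂ <;>
          norm_num [sgn, show ZMod.val (2:ZMod 2) = 0 by decide, ZMod.val_one, ZMod.val_zero, ZMod.val, Fin.val_add]

end Stmt6Aux

/-- for `D₁, D₂` in the quasicentroid,
`[[D₁,D₂]a,b,c] + (-1)^{|a|(|D₁|+|D₂|)}[a,[D₁,D₂]b,c]
 + (-1)^{(|a|+|b|)(|D₁|+|D₂|)}[a,b,[D₁,D₂]c] = 0`. -/
theorem stmt6 (S : DJLSTS k M δ) {s₁ s₂ : ZMod 2} {D₁ D₂ : M →ₗ[k] M}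
    (h₁ : IsQC S s₁ D₁) (h₂ : IsQC S s₂ D₂) :
    ∀ {i j l : ZMod 2} {a b c : M},
      a ∈ S.grade i → b ∈ S.grade j → c ∈ S.grade l →
      S.br (scomm s₁ s₂ D₁ D₂ a) b c
        + sgn k i (s₁ + s₂) • S.br a (scomm s₁ s₂ D₁ D₂ b) c
        + sgn k (i + j) (s₁ + s₂) • S.br a b (scomm s₁ s₂ D₁ D₂ c) = 0 := by
  intro i j l a b c ha hb hc
  have q12 : IsQC S (s₁ + s₂) (D₁ ∘ₗ D₂) := qc_comp S h₁ h₂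
  have q21 : IsQC S (s₁ + s₂) (D₂ ∘ₗ D₁) := by
    rw [add_comm]; exact qc_comp S h₂ h₁
  have key := qc_key S h₁ h₂ ha hb c
  have hsc : ∀ x : M, scomm s₁ s₂ D₁ D₂ x = D₁ (D₂ x) - sgn k s₁ s₂ • D₂ (D₁ x) := by
    intro x
    simp [scomm, LinearMap.sub_apply, LinearMap.smul_apply, LinearMap.comp_apply]
  have z1 : S.br (scomm s₁ s₂ D₁ D₂ a) b c = 0 := by
    rw [hsc a]
    simp only [map_sub, map_smul, LinearMap.sub_apply, LinearMap.smul_apply]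
    rw [← h₁.2, ← h₂.2, ← h₂.2, ← h₁.2, key, sub_self]
  have z2 : S.br a (scomm s₁ s₂ D₁ D₂ b) c = 0 := by
    rw [hsc b]
    simp only [map_sub, map_smul, LinearMap.sub_apply, LinearMap.smul_apply]
    have e := qc_slot2 S q12 ha hb c
    have e' := qc_slot2 S q21 ha hb c
    simp only [LinearMap.comp_apply] at e e'
    rw [e, e', key, smul_smul, smul_smul, mul_comm (sgn k i (s₁ + s₂)), sub_self]
  have z3 : S.br a b (scomm s₁ s₂ D₁ D₂ c) = 0 := by
    rw [hsc c]
    simp only [map_sub, map_smul, LinearMap.sub_apply, LinearMap.smul_apply]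
    have e := qc_slot3 S q12 ha hb hc
    have e' := qc_slot3 S q21 ha hb hc
    simp only [LinearMap.comp_apply] at e e'
    rw [e, e', key, smul_smul, smul_smul, mul_comm (sgn k (i + j) (s₁ + s₂)), sub_self]
  rw [z1, z2, z3, smul_zero, smul_zero, add_zero, add_zero]
end

section
/- For a δ-Jordan Lie supertriple system T over a field of characteristic ≠ 2, the central derivations are exactly the derivations lying in the centroid: ZDer(T) = C(T) ∩ Der(T). -/
variable {k : Type} [Field k] {M : Type} [AddCommGroup M] [Module k M] {δ : k}
variable {W : Type} [AddCommGroup W] [Module k W]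

lemma sgn_ne_zero (k : Type) [Field k] (i j : ZMod 2) : sgn k i j ≠ 0 := by
  unfold sgn
  exact pow_ne_zero _ (neg_ne_zero.mpr one_ne_zero)

lemma delta_pow_ne_zero {S : DJLSTS k M δ} (n : ℕ) : δ ^ n ≠ 0 := by
  rcases S.delta_pm with h | h <;> subst h <;>
    exact pow_ne_zero _ (by simp [neg_ne_zero])

lemma ext_all (S : DJLSTS k M δ) (P : M → Prop) (h0 : P 0)
    (hadd : ∀ x y, P x → P y → P (x + y))
    (hh : ∀ (i : ZMod 2) (a : M), a ∈ S.grade i → P a) : ∀ a, P a := by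
  intro a
  have ha : a ∈ (⊤ : Submodule k M) := trivial
  rw [← S.direct.submodule_iSup_eq_top] at ha
  exact Submodule.iSup_induction (motive := P) S.grade ha hh h0 hadd

/-- over a field of characteristic `≠ 2`,
`ZDer(T) = C(T) ∩ Der(T)` (for homogeneous operators). -/
theorem stmt9 (S : DJLSTS k M δ) (hchar : (2 : k) ≠ 0) {s : ZMod 2} {D : M →ₗ[k] M}
    (hD : IsHomog S s D) :
    IsZDer S D ↔ ∃ n : ℕ, IsCentroid S n s D ∧ IsDer S n s D := by
  constructor
  · intro hZ
    -- middle slot vanishes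
    have hmid : ∀ a b c : M, S.br a (D b) c = 0 := by
      intro a b c
      refine ext_all S (fun b => S.br a (D b) c = 0) (by simp) (fun x y hx hy => by
        simp [map_add, hx, hy]) ?_ b
      intro j b hb
      refine ext_all S (fun a => S.br a (D b) c = 0) (by simp) (fun x y hx hy => by
        simp only [map_add, LinearMap.add_apply] at *; rw [hx, hy, add_zero]) ?_ a
      intro i a ha
      have h := S.skew (hD j b hb) ha c
      rw [h, (hZ b a c).2]
      simp
    -- last slot vanishes
    have hlast : ∀ a b c : M, S.br a b (D c) = 0 := by
      intro a b c
      refine ext_all S (fun c => S.br a b (D c) = 0) (by simp) (fun x y hx hy => by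
        simp [map_add, hx, hy]) ?_ c
      intro l c hc
      refine ext_all S (fun a => S.br a b (D c) = 0) (by simp) (fun x y hx hy => by
        simp only [map_add, LinearMap.add_apply] at *; rw [hx, hy, add_zero]) ?_ a
      intro i a ha
      refine ext_all S (fun b => S.br a b (D c) = 0) (by simp) (fun x y hx hy => by
        simp only [map_add, LinearMap.add_apply] at *; rw [hx, hy, add_zero]) ?_ b
      intro j b hb
      have h := S.cyclic ha hb (hD l c hc)
      rw [hmid b c a, (hZ c a b).2] at h
      simp only [smul_zero, add_zero] at h
      rcases smul_eq_zero.mp h with h' | h'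
      · exact absurd h' (sgn_ne_zero k _ _)
      · exact h'
    refine ⟨0, ⟨hD, ?_⟩, ⟨hD, ?_⟩⟩
    · intro i j a b ha hb c
      refine ⟨?_, ?_, ?_⟩ <;> simp [(hZ a b c).1, (hZ a b c).2, hmid, hlast]
    · intro i j a b ha hb c
      simp [(hZ a b c).1, (hZ a b c).2, hmid, hlast]
  · rintro ⟨n, ⟨-, hC⟩, ⟨-, hDer⟩⟩
    -- homogeneous case
    have hhom : ∀ (i j : ZMod 2) (a b : M), a ∈ S.grade i → b ∈ S.grade j → ∀ c : M,
        D (S.br a b c) = 0 ∧ S.br (D a) b c = 0 := by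
      intro i j a b ha hb c
      obtain ⟨e1, e2, e3⟩ := hC ha hb c
      have hsum := hDer ha hb c
      rw [e1, e2, e3] at hsum
      have h2 : D (S.br a b c) + D (S.br a b c) = 0 := by
        have h3 : D (S.br a b c) + D (S.br a b c) + D (S.br a b c)
            = 0 + D (S.br a b c) := by rw [hsum, zero_add]
        exact add_right_cancel h3
      have hD0 : D (S.br a b c) = 0 := by
        have h4 : (2 : k) • D (S.br a b c) = 0 := by rw [two_smul]; exact h2
        rcases smul_eq_zero.mp h4 with h' | h'
        · exact absurd h' hchar
        · exact h'
      refine ⟨hD0, ?_⟩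
      rw [hD0] at e1
      rcases smul_eq_zero.mp e1 with h' | h'
      · exact absurd h' (delta_pow_ne_zero (S := S) n)
      · exact h'
    intro a b c
    constructor
    · refine ext_all S (fun a => D (S.br a b c) = 0) (by simp) (fun x y hx hy => by
        simp only [map_add, LinearMap.add_apply] at *; rw [hx, hy, add_zero]) ?_ a
      intro i a ha
      refine ext_all S (fun b => D (S.br a b c) = 0) (by simp) (fun x y hx hy => by
        simp only [map_add, LinearMap.add_apply] at *; rw [hx, hy, add_zero]) ?_ b
      intro j b hb
      exact (hhom i j a b ha hb c).1
    · refine ext_all S (fun a => S.br (D a) b c = 0) (by simp) (fun x y hx hy => by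
        simp only [map_add, LinearMap.add_apply] at *; rw [hx, hy, add_zero]) ?_ a
      intro i a ha
      refine ext_all S (fun b => S.br (D a) b c = 0) (by simp) (fun x y hx hy => by
        simp only [map_add, LinearMap.add_apply] at *; rw [hx, hy, add_zero]) ?_ b
      intro j b hb
      exact (hhom i j a b ha hb c).2
end

section
/- Let f_t = Σ_{i≥0} f_i tⁱ be a 1-parameter formal deformation of a δ-Jordan Lie supertriple system T with f₀ = [·,·,·]. Then the infinitesimal f₁ is a 3-cocycle: d³f₁ = 0 with respect to the adjoint representation. -/
variable {k : Type} [Field k] {M : Type} [AddCommGroup M] [Module k M] {δ : k}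
variable {W : Type} [AddCommGroup W] [Module k W]

/-- the infinitesimal `f₁` of a 1-parameter formal deformation is a
3-cocycle with respect to the adjoint representation. -/
theorem stmt13 (S : DJLSTS k M δ) (F : ℕ → (M →ₗ[k] M →ₗ[k] M →ₗ[k] M))
    (hF : IsDeformation S F) : IsCocycle3 S (F 1) := by
  intro i₁ i₂ i₃ i₄ x₁ x₂ x₃ x₄ h₁ h₂ h₃ h₄ x₅
  obtain ⟨h0, -, -, -, h4⟩ := hF
  have h := h4 1 h₁ h₂ h₃ h₄ x₅
  simp only [Finset.sum_range_succ, Finset.sum_range_zero, Nat.sub_self, Nat.sub_zero,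
    zero_add, h0, smul_add] at h
  linear_combination (norm := module) h
end

section
/- If f_t and f'_t are two equivalent 1-parameter formal deformations of a δ-Jordan Lie supertriple system T via φ_t = Σ φ_i tⁱ with φ₀ = id, then f₁ - f'₁ = d¹φ₁; in particular the infinitesimals f₁ and f'₁ define the same class in H³_δ(T,T). -/
variable {k : Type} [Field k] {M : Type} [AddCommGroup M] [Module k M] {δ : k}
variable {W : Type} [AddCommGroup W] [Module k W]

/-- equivalent deformations have cohomologous infinitesimals:
`f₁ - f'₁ = d¹φ₁`. -/
theorem stmt14 (S : DJLSTS k M δ) (F F' : ℕ → (M →ₗ[k] M →ₗ[k] M →ₗ[k] M))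
    (hF : IsDeformation S F) (hF' : IsDeformation S F')
    (φ : ℕ → (M →ₗ[k] M)) (h : DefEquiv S F F' φ) :
    ∀ x₁ x₂ x₃ : M,
      F 1 x₁ x₂ x₃ - F' 1 x₁ x₂ x₃
        = S.br (φ 1 x₁) x₂ x₃ + S.br x₁ (φ 1 x₂) x₃ + S.br x₁ x₂ (φ 1 x₃)
            - φ 1 (S.br x₁ x₂ x₃) := by
  intro x₁ x₂ x₃
  obtain ⟨hφ0, heq⟩ := h
  have h1 := heq 1 x₁ x₂ x₃
  have hA : Finset.Nat.antidiagonalTuple 4 1 =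
      {![(1:ℕ),0,0,0], ![0,1,0,0], ![0,0,1,0], ![0,0,0,1]} := by decide
  rw [hA] at h1
  rw [Finset.sum_range_succ, Finset.sum_range_succ] at h1
  rw [Finset.sum_insert (by decide), Finset.sum_insert (by decide),
    Finset.sum_insert (by decide), Finset.sum_singleton] at h1
  simp only [hφ0, hF.1, hF'.1, LinearMap.id_coe, id_eq, Nat.sub_self, Nat.sub_zero,
    Finset.range_zero, Finset.sum_empty, zero_add,
    Matrix.cons_val_zero, Matrix.cons_val_one, Matrix.head_cons,
    Matrix.cons_val_two, Matrix.cons_val_three, Matrix.tail_cons] at h1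
  rw [eq_sub_iff_add_eq, sub_add_eq_add_sub, h1]
  abel
end
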